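/- Let τ be the coordinatewise multiplication-by-t automorphism of F_p((t))^d, V a τ-invariant compact open subgroup, F a complement of τ(V) in V with F_p-basis b_1, ..., b_d. Then every z ∈ F_p((t))^d can be written uniquely as a convergent sum z = Σ_{j∈ℤ, 1≤k≤d} n_{j,k} τ^j(b_k) with n_{j,k} ∈ F_p such that n_{j,k} = 0 for all j below some j_0; moreover, for m ∈ ℤ, z ∈ τ^m(V) if and only if the coefficients can be chosen with n_{j,k} = 0 for all j < m. -/

import Mathlib

/-- Coordinatewise multiplication by `t^j` (`j ∈ ℤ`) on `F_p((t))^d`, i.e. `τ^j`. -/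
noncomputable def tauZ (p d : ℕ) (j : ℤ) (z : Fin d → LaurentSeries (ZMod p)) :
    Fin d → LaurentSeries (ZMod p) :=
  fun r => HahnSeries.single j (1 : ZMod p) * z r

namespace TauAux

open Filter Topology Multiplicative

variable (p d : ℕ) [Fact p.Prime]

local notation "K" => LaurentSeries (ZMod p)
local notation "M" => Fin d → LaurentSeries (ZMod p)
local notation "Z0" => WithZero (Multiplicative ℤ)

lemma tauZ_add (j : ℤ) (x y : M) : tauZ p d j (x + y) = tauZ p d j x + tauZ p d j y := by
  funext r; simp [tauZ, mul_add]

lemma tauZ_comp (j j' : ℤ) (x : M) : tauZ p d j (tauZ p d j' x) = tauZ p d (j + j') x := by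
  funext r
  simp only [tauZ, ← mul_assoc, HahnSeries.single_mul_single, one_mul]

lemma tauZ_zero_apply (x : M) : tauZ p d 0 x = x := by
  funext r; simp [tauZ, HahnSeries.single_zero_one]

lemma tauZ_injective (j : ℤ) : Function.Injective (tauZ p d j) := by
  intro x y h
  have := congrArg (tauZ p d (-j)) h
  rwa [tauZ_comp, tauZ_comp, neg_add_cancel, tauZ_zero_apply, tauZ_zero_apply] at this

lemma tauZ_smul (j : ℤ) (c : ZMod p) (x : M) : tauZ p d j (c • x) = c • tauZ p d j x := by
  funext r
  simp only [tauZ, Pi.smul_apply]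
  rw [← HahnSeries.single_zero_mul_eq_smul, ← HahnSeries.single_zero_mul_eq_smul, ← mul_assoc,
    ← mul_assoc, HahnSeries.single_mul_single, HahnSeries.single_mul_single, one_mul, mul_one,
    add_comm]

lemma tauZ_continuous (j : ℤ) : Continuous (tauZ p d j) := by
  refine continuous_pi fun r => ?_
  exact (continuous_mul_left _).comp (continuous_apply r)

/-- `τ^j` as an additive group hom. -/
noncomputable def tauHom (j : ℤ) : M →+ M :=
  AddMonoidHom.mk' (tauZ p d j) (tauZ_add p d j)

lemma tauZ_sum {ι : Type*} (s : Finset ι) (j : ℤ) (f : ι → M) :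
    tauZ p d j (∑ i ∈ s, f i) = ∑ i ∈ s, tauZ p d j (f i) :=
  map_sum (tauHom p d j) f s

/-- `ZMod p`-scalar multiples stay in additive subgroups. -/
lemma zmod_smul_mem (H : AddSubgroup M) (c : ZMod p) {x : M} (hx : x ∈ H) : c • x ∈ H := by
  have h1 : ((c.val : ℕ) : ZMod p) = c := (ZMod.natCast_val c).trans (ZMod.cast_id p c)
  have h2 : c • x = c.val • x := by rw [← Nat.cast_smul_eq_nsmul (ZMod p) c.val x, h1]
  rw [h2]
  exact AddSubgroup.nsmul_mem H hx _

/-- The "ball" subgroup of `M` of radius `γ`. -/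
def ball (γ : Z0ˣ) : AddSubgroup M where
  carrier := {z | ∀ r, Valued.v (z r) < (γ : Z0)}
  zero_mem' := fun r => by
    simp only [Pi.zero_apply, map_zero]; exact Units.zero_lt γ
  add_mem' := fun hx hy r => Valued.v.map_add_lt (hx r) (hy r)
  neg_mem' := fun hx r => by simpa using hx r

lemma mem_nhds_Z0 {s : Set K} (x : K) (γ : Z0ˣ)
    (h : {y : K | Valued.v (y - x) < (γ : Z0)} ⊆ s) : s ∈ 𝓝 x := by
  obtain ⟨u, hu⟩ := WithZero.ne_zero_iff_exists.mp γ.ne_zero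
  have ha : Valued.v (HahnSeries.single (-toAdd u) (1 : ZMod p) : K) = (γ : Z0) := by
    rw [LaurentSeries.valuation_single_zpow, neg_neg, ← hu]
    rfl
  have ha1 : Valued.v (HahnSeries.single (-toAdd u) (1 : ZMod p) : K) ≠ 0 := by
    rw [ha]; exact γ.ne_zero
  have ha0 : Valued.v.restrict (HahnSeries.single (-toAdd u) (1 : ZMod p) : K) ≠ 0 := by
    simp [ha1]
  rw [Valued.mem_nhds]
  refine ⟨Units.mk0 _ ha0, fun y hy => h ?_⟩
  have hy' : Valued.v.restrict (y - x) <
      Valued.v.restrict (HahnSeries.single (-toAdd u) (1 : ZMod p) : K) := hy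
  show Valued.v (y - x) < (γ : Z0)
  rw [← ha]
  exact Valued.v.restrict_lt_iff.mp hy'

lemma mem_nhds_zero_Z0 {s : Set K} (hs : s ∈ 𝓝 (0 : K)) :
    ∃ γ : Z0ˣ, {x : K | Valued.v x < (γ : Z0)} ⊆ s := by
  obtain ⟨g, hg⟩ := Valued.mem_nhds_zero.mp hs
  refine ⟨Units.map (MonoidWithZeroHom.ValueGroup₀.embedding
    (f := (MonoidWithZeroHom.ofClass (Valued.v : Valuation K Z0)))) g, fun x hx => hg ?_⟩
  have hx' : Valued.v x < MonoidWithZeroHom.ValueGroup₀.embedding g.1 := hx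
  exact Valued.v.restrict_lt_iff_lt_embedding.mpr hx'

lemma isOpen_ballK (γ : Z0ˣ) : IsOpen {x : K | Valued.v x < (γ : Z0)} := by
  rw [isOpen_iff_mem_nhds]
  intro x hx
  refine mem_nhds_Z0 p x γ fun y hy => ?_
  have h1 := Valued.v.map_add (y - x) x
  rw [sub_add_cancel] at h1
  exact lt_of_le_of_lt h1 (max_lt hy hx)

lemma isOpen_ball (γ : Z0ˣ) : IsOpen (ball p d γ : Set M) := by
  have h : (ball p d γ : Set M) = ⋂ r, (fun z : M => z r) ⁻¹' {x : K | Valued.v x < (γ : Z0)} := by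
    ext z; simp [ball, Set.mem_iInter]
  rw [h]
  exact isOpen_iInter_of_finite fun r => (isOpen_ballK p γ).preimage (continuous_apply r)

lemma ball_mono {γ γ' : Z0ˣ} (h : (γ : Z0) ≤ γ') : (ball p d γ : Set M) ⊆ ball p d γ' :=
  fun _ hz r => lt_of_lt_of_le (hz r) h

/-- Every element lies in some ball. -/
lemma exists_mem_ball (z : M) : ∃ γ : Z0ˣ, z ∈ ball p d γ := by
  obtain ⟨B, hB⟩ := Finset.exists_le (Finset.univ.image fun r => Valued.v (z r))
  obtain ⟨γ, hγ⟩ : ∃ γ : Z0ˣ, B < (γ : Z0) := by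
    rcases eq_or_ne B 0 with h0 | h0
    · exact ⟨1, by simp [h0]⟩
    · obtain ⟨u, hu⟩ := WithZero.ne_zero_iff_exists.mp h0
      refine ⟨Units.mk0 (↑(u * ofAdd (1:ℤ))) WithZero.coe_ne_zero, ?_⟩
      rw [← hu, Units.val_mk0, WithZero.coe_lt_coe]
      exact lt_mul_of_one_lt_right' u (by rw [← ofAdd_zero]; exact Multiplicative.ofAdd_lt.2 one_pos)
  exact ⟨γ, fun r => lt_of_le_of_lt (hB _ (Finset.mem_image_of_mem _ (Finset.mem_univ r))) hγ⟩

/-- Balls form a basis of neighborhoods of `0` in `M`. -/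
lemma exists_ball_subset (hd : 0 < d) {U : Set M} (hU : U ∈ nhds (0 : M)) :
    ∃ γ : Z0ˣ, (ball p d γ : Set M) ⊆ U := by
  have : Nonempty (Fin d) := ⟨⟨0, hd⟩⟩
  rw [nhds_pi] at hU
  obtain ⟨I, hIfin, t, ht, hsub⟩ := Filter.mem_pi.mp hU
  choose γi hγi using fun i => mem_nhds_zero_Z0 p (by simpa using ht i)
  obtain ⟨i0, -, hi0⟩ := Finset.exists_mem_eq_inf' (Finset.univ_nonempty (α := Fin d))
    fun i => ((γi i : Z0))
  set mv := Finset.univ.inf' Finset.univ_nonempty fun i => ((γi i : Z0)) with hmv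
  have hne : mv ≠ 0 := by rw [hi0]; exact (γi i0).ne_zero
  refine ⟨Units.mk0 mv hne, fun z hz => hsub fun i _ => ?_⟩
  refine hγi i ?_
  have hle : mv ≤ (γi i : Z0) := Finset.inf'_le _ (Finset.mem_univ i)
  exact lt_of_lt_of_le (hz i) hle

lemma exists_ball_add_subset (hd : 0 < d) {U : Set M} {z : M} (hU : U ∈ nhds z) :
    ∃ γ : Z0ˣ, ∀ w ∈ ball p d γ, z + w ∈ U := by
  have hc : Continuous fun w : M => z + w := continuous_const.add continuous_id
  have h : (fun w : M => z + w) ⁻¹' U ∈ nhds (0 : M) :=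
    hc.continuousAt.preimage_mem_nhds (by simpa using hU)
  obtain ⟨γ, hγ⟩ := exists_ball_subset p d hd h
  exact ⟨γ, fun w hw => hγ hw⟩

lemma valued_tauZ (j : ℤ) (z : M) (r : Fin d) :
    Valued.v (tauZ p d j z r) = (↑(ofAdd (-j)) : Z0) * Valued.v (z r) := by
  simp only [tauZ]
  rw [map_mul, LaurentSeries.valuation_single_zpow]
  rfl

/-- Decay: multiplying by `t^j` for large `j` sends one ball into another. -/
lemma decay (γ0 γ : Z0ˣ) : ∃ J : ℤ, ∀ j : ℤ, J ≤ j → ∀ z ∈ ball p d γ0,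
    tauZ p d j z ∈ ball p d γ := by
  obtain ⟨u0, hu0⟩ := WithZero.ne_zero_iff_exists.mp γ0.ne_zero
  obtain ⟨u, hu⟩ := WithZero.ne_zero_iff_exists.mp γ.ne_zero
  refine ⟨toAdd u0 - toAdd u, fun j hj z hz r => ?_⟩
  rw [valued_tauZ]
  rcases eq_or_ne (Valued.v (z r)) 0 with h0 | h0
  · rw [h0, mul_zero]; exact Units.zero_lt γ
  · obtain ⟨x, hx⟩ := WithZero.ne_zero_iff_exists.mp h0
    have hxlt : x < u0 := by
      have h := hz r
      rw [← hx, ← hu0, WithZero.coe_lt_coe] at h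
      exact h
    rw [← hx, ← hu, ← WithZero.coe_mul, WithZero.coe_lt_coe]
    calc ofAdd (-j) * x < ofAdd (-j) * u0 := mul_lt_mul_right hxlt _
      _ ≤ u := by
        rw [← ofAdd_toAdd u0, ← ofAdd_add, ← ofAdd_toAdd u, Multiplicative.ofAdd_le]
        omega

/-- `τ^m(V)` as an additive subgroup. -/
noncomputable def tauV (V : AddSubgroup M) (m : ℤ) : AddSubgroup M := V.map (tauHom p d m)

lemma mem_tauV {V : AddSubgroup M} {m : ℤ} {z : M} :
    z ∈ tauV p d V m ↔ ∃ v ∈ V, z = tauZ p d m v := by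
  simp only [tauV, AddSubgroup.mem_map]
  constructor
  · rintro ⟨v, hv, rfl⟩; exact ⟨v, hv, rfl⟩
  · rintro ⟨v, hv, rfl⟩; exact ⟨v, hv, rfl⟩

lemma isClosed_tauV (V : AddSubgroup M) (hVc : IsCompact (V : Set M)) (m : ℤ) :
    IsClosed (tauV p d V m : Set M) := by
  have h1 : (tauV p d V m : Set M) = tauZ p d m '' V := by
    ext z
    simp only [SetLike.mem_coe, mem_tauV, Set.mem_image]
    exact ⟨fun ⟨v, hv, he⟩ => ⟨v, hv, he.symm⟩, fun ⟨v, hv, he⟩ => ⟨v, hv, he.symm⟩⟩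
  rw [h1]
  exact (hVc.image (tauZ_continuous p d m)).isClosed

lemma tauZ_nat_mem (V : AddSubgroup M) (hτV : ∀ v ∈ V, tauZ p d 1 v ∈ V)
    (v : M) (hv : v ∈ V) : ∀ N : ℕ, tauZ p d (N : ℤ) v ∈ V := by
  intro N
  induction N with
  | zero => simpa [tauZ_zero_apply] using hv
  | succ n ih =>
      have h : ((n+1 : ℕ) : ℤ) = 1 + n := by omega
      rw [h, ← tauZ_comp]
      exact hτV _ ih

lemma tauV_mono (V : AddSubgroup M) (hτV : ∀ v ∈ V, tauZ p d 1 v ∈ V)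
    {m j : ℤ} (h : m ≤ j) {z : M} (hz : z ∈ tauV p d V j) : z ∈ tauV p d V m := by
  rw [mem_tauV] at hz ⊢
  obtain ⟨v, hv, rfl⟩ := hz
  refine ⟨tauZ p d (j - m) v, ?_, ?_⟩
  · have h2 : j - m = ((j - m).toNat : ℤ) := by omega
    rw [h2]; exact tauZ_nat_mem p d V hτV v hv _
  · rw [tauZ_comp, show m + (j - m) = j by omega]

/-- `V` is contained in some ball (compactness). -/
lemma V_subset_ball (V : AddSubgroup M) (hVc : IsCompact (V : Set M)) :
    ∃ γ0 : Z0ˣ, (V : Set M) ⊆ ball p d γ0 := by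
  have hcover : (V : Set M) ⊆ ⋃ γ : Z0ˣ, (ball p d γ : Set M) := by
    intro z _
    obtain ⟨γ, hγ⟩ := exists_mem_ball p d z
    exact Set.mem_iUnion.mpr ⟨γ, hγ⟩
  have hdir : Directed (· ⊆ ·) fun γ : Z0ˣ => (ball p d γ : Set M) := by
    intro γ1 γ2
    rcases le_total (γ1 : Z0) (γ2 : Z0) with h | h
    · exact ⟨γ2, ball_mono p d h, subset_rfl⟩
    · exact ⟨γ1, subset_rfl, ball_mono p d h⟩
  obtain ⟨γ0, hγ0⟩ := hVc.elim_directed_cover _ (fun γ => isOpen_ball p d γ) hcover hdir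
  exact ⟨γ0, hγ0⟩

/-- Decay for `V`: `τ^j(V)` is inside any given ball for `j` large. -/
lemma decayV (V : AddSubgroup M) (hVc : IsCompact (V : Set M)) (γ : Z0ˣ) :
    ∃ J : ℤ, ∀ j : ℤ, J ≤ j → ∀ v ∈ V, tauZ p d j v ∈ ball p d γ := by
  obtain ⟨γ0, hγ0⟩ := V_subset_ball p d V hVc
  obtain ⟨J, hJ⟩ := decay p d γ0 γ
  exact ⟨J, fun j hj v hv => hJ j hj v (hγ0 hv)⟩

/-- Sums with all terms in a closed subgroup have sum in it. -/
lemma hasSum_mem_closed {ι : Type*} (H : AddSubgroup M) (hH : IsClosed (H : Set M))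
    (f : ι → M) (hf : ∀ i, f i ∈ H) {z : M} (h : HasSum f z) : z ∈ H := by
  refine hH.mem_of_tendsto h (Filter.Eventually.of_forall fun s => ?_)
  exact AddSubgroup.sum_mem H fun i _ => hf i

/-- Existence of the expansion for `z = τ^m v0`, `v0 ∈ V`. -/
lemma exists_expansion (hd : 0 < d) (V : AddSubgroup M) (hVc : IsCompact (V : Set M))
    (b : Fin d → M) (hbV : ∀ k, b k ∈ V)
    (hgen : ∀ v ∈ V, ∃ c : Fin d → ZMod p, ∃ w ∈ V, v = (∑ k, c k • b k) + tauZ p d 1 w)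
    (m : ℤ) (v0 : M) (hv0 : v0 ∈ V) :
    ∃ n : ℤ × Fin d → ZMod p, (∀ jk : ℤ × Fin d, jk.1 < m → n jk = 0) ∧
      HasSum (fun jk : ℤ × Fin d => n jk • tauZ p d jk.1 (b jk.2)) (tauZ p d m v0) := by
  classical
  have H : ∀ v : {x : M // x ∈ V}, ∃ cw : (Fin d → ZMod p) × {x : M // x ∈ V},
      v.val = (∑ k, cw.1 k • b k) + tauZ p d 1 cw.2.val := by
    rintro ⟨v, hv⟩
    obtain ⟨c, w, hw, he⟩ := hgen v hv
    exact ⟨(c, ⟨w, hw⟩), he⟩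
  choose g hg using H
  let vs : ℕ → {x : M // x ∈ V} := fun N => Nat.rec ⟨v0, hv0⟩ (fun _ s => (g s).2) N
  have hvs : ∀ N, vs (N+1) = (g (vs N)).2 := fun N => rfl
  have key : ∀ N : ℕ, tauZ p d m v0 =
      (∑ j ∈ Finset.range N, ∑ k, (g (vs j)).1 k • tauZ p d (m + j) (b k))
        + tauZ p d (m + N) (vs N).val := by
    intro N
    induction N with
    | zero => simp [vs]
    | succ N ih =>
      have h1 : (vs N).val = (∑ k, (g (vs N)).1 k • b k) + tauZ p d 1 (vs (N+1)).val := by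
        rw [hvs]; exact hg (vs N)
      have h2 : tauZ p d (m + N) (vs N).val
          = (∑ k, (g (vs N)).1 k • tauZ p d (m + N) (b k))
            + tauZ p d (m + ((N+1 : ℕ) : ℤ)) (vs (N+1)).val := by
        rw [h1, tauZ_add, tauZ_sum]
        congr 1
        · exact Finset.sum_congr rfl fun k _ => tauZ_smul p d _ _ _
        · rw [tauZ_comp, show m + (N : ℤ) + 1 = m + ((N+1 : ℕ) : ℤ) by push_cast; ring]
      rw [ih, h2, Finset.sum_range_succ, add_assoc]
  set f : ℤ × Fin d → M := fun jk =>
    (if h : m ≤ jk.1 then (g (vs (jk.1 - m).toNat)).1 jk.2 else 0) • tauZ p d jk.1 (b jk.2)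
    with hf
  refine ⟨fun jk => if h : m ≤ jk.1 then (g (vs (jk.1 - m).toNat)).1 jk.2 else 0,
    fun jk hjk => dif_neg (by omega), ?_⟩
  refine tendsto_atTop'.mpr ?_
  intro U hU
  obtain ⟨γ, hγ⟩ := exists_ball_add_subset p d hd hU
  obtain ⟨J, hJ⟩ := decayV p d V hVc γ
  set N : ℕ := (J - m).toNat with hN
  have hmN : J ≤ m + N := by omega
  set S0 : Finset (ℤ × Fin d) :=
    ((Finset.range N).image (fun j : ℕ => m + (j : ℤ))) ×ˢ Finset.univ with hS0def
  refine ⟨S0, fun S hS => ?_⟩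
  have hsplit : ∑ jk ∈ S, f jk = ∑ jk ∈ S \ S0, f jk + ∑ jk ∈ S0, f jk :=
    (Finset.sum_sdiff hS).symm
  have hS0 : ∑ jk ∈ S0, f jk
      = ∑ j ∈ Finset.range N, ∑ k, (g (vs j)).1 k • tauZ p d (m + j) (b k) := by
    have hinj : ∀ x ∈ Finset.range N, ∀ y ∈ Finset.range N,
        (m + (x : ℤ)) = (m + (y : ℤ)) → x = y := by
      intro x _ y _ h
      omega
    rw [hS0def, Finset.sum_product, Finset.sum_image hinj]
    refine Finset.sum_congr rfl fun j hj => Finset.sum_congr rfl fun k _ => ?_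
    rw [hf]
    simp only []
    rw [dif_pos (by omega : m ≤ m + (j:ℤ)),
      show ((m + (j:ℤ) - m).toNat) = j by omega]
  have hS0key : ∑ jk ∈ S0, f jk = tauZ p d m v0 - tauZ p d (m + N) (vs N).val := by
    rw [hS0, eq_sub_iff_add_eq]
    exact (key N).symm
  have hrest : ∑ jk ∈ S \ S0, f jk ∈ ball p d γ := by
    refine AddSubgroup.sum_mem _ fun jk hjk => ?_
    rw [hf]
    simp only []
    rcases le_or_gt m jk.1 with hm | hm
    · have hbig : m + N ≤ jk.1 := by
        by_contra hlt
        push_neg at hlt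
        have hjk0 : jk ∈ S0 := by
          rw [hS0def, Finset.mem_product]
          have hmem1 : (jk.1 - m).toNat ∈ Finset.range N := Finset.mem_range.mpr (by omega)
          have hmem2 : m + (((jk.1 - m).toNat : ℕ) : ℤ) = jk.1 := by omega
          exact ⟨Finset.mem_image.mpr ⟨(jk.1 - m).toNat, hmem1, hmem2⟩, Finset.mem_univ _⟩
        exact (Finset.mem_sdiff.mp hjk).2 hjk0
      exact zmod_smul_mem p d _ _ (hJ jk.1 (by omega) (b jk.2) (hbV jk.2))
    · rw [dif_neg (by omega), zero_smul]
      exact zero_mem _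
  have htail : tauZ p d (m + N) (vs N).val ∈ ball p d γ :=
    hJ _ (by omega) _ (vs N).2
  have hfin : ∑ jk ∈ S, f jk
      = tauZ p d m v0 + (∑ jk ∈ S \ S0, f jk - tauZ p d (m + N) (vs N).val) := by
    rw [hsplit, hS0key]; abel
  rw [hfin]
  exact hγ _ (AddSubgroup.sub_mem _ hrest htail)

/-- If `z ∈ τ^m(V)` then the coefficients of any expansion of `z` vanish below `m`. -/
lemma vanish_of_mem (V : AddSubgroup M) (hVc : IsCompact (V : Set M))
    (hτV : ∀ v ∈ V, tauZ p d 1 v ∈ V)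
    (b : Fin d → M) (hbV : ∀ k, b k ∈ V)
    (hdir : ∀ (c : Fin d → ZMod p) (w : M), w ∈ V →
      (∑ k, c k • b k) = tauZ p d 1 w → c = 0)
    (n : ℤ × Fin d → ZMod p) (j0 : ℤ) (hj0 : ∀ jk : ℤ × Fin d, jk.1 < j0 → n jk = 0)
    {z : M} (hs : HasSum (fun jk : ℤ × Fin d => n jk • tauZ p d jk.1 (b jk.2)) z)
    (m : ℤ) (hz : z ∈ tauV p d V m) : ∀ jk : ℤ × Fin d, jk.1 < m → n jk = 0 := by
  classical
  by_contra hcon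
  push_neg at hcon
  obtain ⟨jk0, hjk0m, hjk0⟩ := hcon
  obtain ⟨j1, hj1S, hj1min⟩ := Int.exists_least_of_bdd (P := fun j => ∃ k, n (j, k) ≠ 0)
    ⟨j0, fun j hj => by
      by_contra h
      push_neg at h
      obtain ⟨k, hk⟩ := hj
      exact hk (hj0 (j, k) (by omega))⟩
    ⟨jk0.1, jk0.2, by simpa using hjk0⟩
  have hj1m : j1 < m := lt_of_le_of_lt (hj1min jk0.1 ⟨jk0.2, by simpa using hjk0⟩) hjk0m
  set f : ℤ × Fin d → M := fun jk => n jk • tauZ p d jk.1 (b jk.2) with hfdef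
  set T : M := ∑ k, n (j1, k) • tauZ p d j1 (b k) with hT
  have hh : HasSum (fun jk : ℤ × Fin d => if jk.1 = j1 then f jk else 0) T := by
    have hz0 : ∀ jk : ℤ × Fin d, jk ∉ (({j1} : Finset ℤ) ×ˢ Finset.univ) →
        (if jk.1 = j1 then f jk else 0) = 0 := by
      intro jk hjk
      rw [if_neg]
      intro h
      exact hjk (by rw [Finset.mem_product]; exact ⟨by simp [h], Finset.mem_univ _⟩)
    have := hasSum_sum_of_ne_finset_zero (L := SummationFilter.unconditional _) hz0
    convert this using 1
    rw [Finset.sum_product]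
    simp [hfdef, hT]
  have hg : HasSum (fun jk : ℤ × Fin d => f jk - (if jk.1 = j1 then f jk else 0)) (z - T) :=
    hs.sub hh
  have hmem : z - T ∈ tauV p d V (j1 + 1) := by
    refine hasSum_mem_closed p d _ (isClosed_tauV p d V hVc _) _ ?_ hg
    intro jk
    rcases lt_trichotomy jk.1 j1 with h | h | h
    · have hn0 : n jk = 0 := by
        by_contra hne
        have := hj1min jk.1 ⟨jk.2, by simpa using hne⟩
        omega
      rw [if_neg (by omega), sub_zero, hfdef]
      simp only []
      rw [hn0, zero_smul]
      exact zero_mem _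
    · rw [if_pos h, sub_self]
      exact zero_mem _
    · rw [if_neg (by omega), sub_zero, hfdef]
      simp only []
      refine zmod_smul_mem p d _ _ (tauV_mono p d V hτV (by omega : j1 + 1 ≤ jk.1) ?_)
      rw [mem_tauV]
      exact ⟨b jk.2, hbV _, rfl⟩
  have hzmem : z ∈ tauV p d V (j1 + 1) := tauV_mono p d V hτV (by omega) hz
  have hTmem : T ∈ tauV p d V (j1 + 1) := by
    have h := AddSubgroup.sub_mem _ hzmem hmem
    simpa using h
  rw [mem_tauV] at hTmem
  obtain ⟨w, hw, hTw⟩ := hTmem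
  have hTeq : T = tauZ p d j1 (∑ k, n (j1, k) • b k) := by
    rw [tauZ_sum, hT]
    exact Finset.sum_congr rfl fun k _ => by rw [tauZ_smul]
  have heq : (∑ k, n (j1, k) • b k) = tauZ p d 1 w := by
    apply tauZ_injective p d j1
    rw [← hTeq, tauZ_comp, hTw]
  have hzero := hdir _ w hw heq
  obtain ⟨k1, hk1⟩ := hj1S
  exact hk1 (congrFun hzero k1)

/-- If the coefficients vanish below `m`, then `z ∈ τ^m(V)`. -/
lemma mem_of_vanish (V : AddSubgroup M) (hVc : IsCompact (V : Set M))
    (hτV : ∀ v ∈ V, tauZ p d 1 v ∈ V)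
    (b : Fin d → M) (hbV : ∀ k, b k ∈ V)
    (n : ℤ × Fin d → ZMod p) (m : ℤ) (hn : ∀ jk : ℤ × Fin d, jk.1 < m → n jk = 0)
    {z : M} (hs : HasSum (fun jk : ℤ × Fin d => n jk • tauZ p d jk.1 (b jk.2)) z) :
    z ∈ tauV p d V m := by
  refine hasSum_mem_closed p d _ (isClosed_tauV p d V hVc m) _ ?_ hs
  intro jk
  rcases lt_or_ge jk.1 m with h | h
  · rw [hn jk h, zero_smul]
    exact zero_mem _
  · refine zmod_smul_mem p d _ _ (tauV_mono p d V hτV h ?_)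
    rw [mem_tauV]
    exact ⟨b jk.2, hbV _, rfl⟩

/-- Every `z` lies in some `τ^m(V)` for `V` open. -/
lemma exists_mem_tauV (hd : 0 < d) (V : AddSubgroup M) (hVo : IsOpen (V : Set M)) (z : M) :
    ∃ m : ℤ, z ∈ tauV p d V m := by
  obtain ⟨γV, hγV⟩ := exists_ball_subset p d hd (hVo.mem_nhds V.zero_mem)
  obtain ⟨γz, hγz⟩ := exists_mem_ball p d z
  obtain ⟨J, hJ⟩ := decay p d γz γV
  refine ⟨-J, ?_⟩
  rw [mem_tauV]
  refine ⟨tauZ p d J z, hγV (hJ J le_rfl z hγz), ?_⟩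
  rw [tauZ_comp, neg_add_cancel, tauZ_zero_apply]

end TauAux

/-- With `V` a `τ`-invariant compact open subgroup of `F_p((t))^d` and `b_1, …, b_d` a
basis of a complement `F` of `τ(V)` in `V`, every `z ∈ F_p((t))^d` has a unique convergent
expansion `z = Σ_{j,k} n_{j,k} τ^j(b_k)` with coefficients vanishing for `j` below some
bound; moreover `z ∈ τ^m(V)` if and only if the coefficients vanish for all `j < m`. -/
theorem tau_expansion (p : ℕ) [Fact p.Prime] (d : ℕ) (hd : 0 < d)
    (V : AddSubgroup (Fin d → LaurentSeries (ZMod p)))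
    (hVc : IsCompact (V : Set (Fin d → LaurentSeries (ZMod p))))
    (hVo : IsOpen (V : Set (Fin d → LaurentSeries (ZMod p))))
    (hτV : ∀ v ∈ V, tauZ p d 1 v ∈ V)
    (b : Fin d → (Fin d → LaurentSeries (ZMod p)))
    (hbV : ∀ k, b k ∈ V)
    (hgen : ∀ v ∈ V, ∃ c : Fin d → ZMod p, ∃ w ∈ V,
      v = (∑ k, c k • b k) + tauZ p d 1 w)
    (hdir : ∀ (c : Fin d → ZMod p) (w : Fin d → LaurentSeries (ZMod p)), w ∈ V →
      (∑ k, c k • b k) = tauZ p d 1 w → c = 0)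
    (z : Fin d → LaurentSeries (ZMod p)) :
    (∃! n : ℤ × Fin d → ZMod p,
      (∃ j0 : ℤ, ∀ jk : ℤ × Fin d, jk.1 < j0 → n jk = 0) ∧
      HasSum (fun jk : ℤ × Fin d => n jk • tauZ p d jk.1 (b jk.2)) z) ∧
    (∀ n : ℤ × Fin d → ZMod p,
      (∃ j0 : ℤ, ∀ jk : ℤ × Fin d, jk.1 < j0 → n jk = 0) →
      HasSum (fun jk : ℤ × Fin d => n jk • tauZ p d jk.1 (b jk.2)) z →
      ∀ m : ℤ, ((∃ v ∈ V, z = tauZ p d m v) ↔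
        ∀ jk : ℤ × Fin d, jk.1 < m → n jk = 0)) := by
  classical
  have hmem_iff : ∀ n : ℤ × Fin d → ZMod p,
      (∃ j0 : ℤ, ∀ jk : ℤ × Fin d, jk.1 < j0 → n jk = 0) →
      HasSum (fun jk : ℤ × Fin d => n jk • tauZ p d jk.1 (b jk.2)) z →
      ∀ m : ℤ, ((∃ v ∈ V, z = tauZ p d m v) ↔
        ∀ jk : ℤ × Fin d, jk.1 < m → n jk = 0) := by
    intro n hb hs m
    obtain ⟨j0, hj0⟩ := hb
    constructor
    · intro hv
      exact TauAux.vanish_of_mem p d V hVc hτV b hbV hdir n j0 hj0 hs m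
        ((TauAux.mem_tauV p d).mpr hv)
    · intro hvan
      exact (TauAux.mem_tauV p d).mp
        (TauAux.mem_of_vanish p d V hVc hτV b hbV n m hvan hs)
  refine ⟨?_, hmem_iff⟩
  obtain ⟨m0, hm0⟩ := TauAux.exists_mem_tauV p d hd V hVo z
  rw [TauAux.mem_tauV] at hm0
  obtain ⟨v0, hv0, hz0⟩ := hm0
  obtain ⟨n, hn1, hn2⟩ := TauAux.exists_expansion p d hd V hVc b hbV hgen m0 v0 hv0
  have hsum_n : HasSum (fun jk : ℤ × Fin d => n jk • tauZ p d jk.1 (b jk.2)) z := by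
    rw [hz0]; exact hn2
  refine ⟨n, ⟨⟨m0, hn1⟩, hsum_n⟩, ?_⟩
  rintro n' ⟨⟨j0', hj0'⟩, hs'⟩
  have hdiff : HasSum (fun jk : ℤ × Fin d => (n' jk - n jk) • tauZ p d jk.1 (b jk.2)) 0 := by
    have h := hs'.sub hsum_n
    rw [sub_self] at h
    have heq : (fun jk : ℤ × Fin d => (n' jk - n jk) • tauZ p d jk.1 (b jk.2))
        = fun jk : ℤ × Fin d => n' jk • tauZ p d jk.1 (b jk.2) - n jk • tauZ p d jk.1 (b jk.2) := by
      funext jk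
      exact sub_smul (n' jk) (n jk) (tauZ p d jk.1 (b jk.2))
    rw [heq]
    exact h
  have hvan : ∀ m : ℤ, ∀ jk : ℤ × Fin d, jk.1 < m → n' jk - n jk = 0 := fun m =>
    TauAux.vanish_of_mem p d V hVc hτV b hbV hdir (fun jk => n' jk - n jk)
      (min j0' m0) (fun jk hjk => by
        obtain ⟨h1, h2⟩ := lt_min_iff.mp hjk
        show n' jk - n jk = 0
        rw [hj0' jk h1, hn1 jk h2, sub_self]) hdiff m (zero_mem _)
  funext jk
  exact sub_eq_zero.mp (hvan (jk.1 + 1) jk (by omega))
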